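/- Let O be a discrete valuation ring with uniformizer π and fraction field K, let V be an r-dimensional K-vector space, and let M₁, M₂, M₃ be lattices in V. Then Pos(M₁,M₃) ≤ Pos(M₁,M₂) + Pos(M₂,M₃) in the dominance order, where + denotes componentwise addition of the decreasing integer r-tuples; explicitly, for every 1 ≤ k ≤ r, Σ_{i=1}^k Pos(M₁,M₃)_i ≤ Σ_{i=1}^k (Pos(M₁,M₂)_i + Pos(M₂,M₃)_i), with equality when k = r. -/

import Mathlib

open Finset

/-- `M` and `N` are the `O`-lattices spanned by `(e i)` and `(π^{-a i} • e i)` respectively,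
i.e. the basis `e` is adapted to `(M, N)` with relative position `a`. -/
def IsAdaptedBasis {O K V : Type*} [CommRing O] [Field K] [Algebra O K]
    [AddCommGroup V] [Module K V] [Module O V] [IsScalarTower O K V]
    (π : O) {r : ℕ} (M N : Submodule O V) (e : Module.Basis (Fin r) K V) (a : Fin r → ℤ) : Prop :=
  M = Submodule.span O (Set.range fun i => e i) ∧
    N = Submodule.span O (Set.range fun i => (algebraMap O K π) ^ (-(a i)) • e i)



namespace PosTriangleAux

variable {O K : Type*} [CommRing O] [Field K] [Algebra O K]

/-- `x ∈ π^{-c}·O`, i.e. the `π`-adic valuation of `x` is at least `-c`. -/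
def MemVal (π : O) (c : ℤ) (x : K) : Prop :=
  ∃ y : O, (algebraMap O K π) ^ c * x = algebraMap O K y

variable {π : O}

theorem memVal_zero (c : ℤ) : MemVal π c (0 : K) := ⟨0, by simp⟩

theorem memVal_algebraMap (y : O) : MemVal π 0 (algebraMap O K y) := ⟨y, by simp⟩

theorem memVal_one : MemVal π 0 (1 : K) := by simpa using memVal_algebraMap (K := K) (π := π) 1

theorem memVal_intCast (n : ℤ) : MemVal π 0 ((n : ℤ) : K) :=
  ⟨(n : O), by simp [map_intCast]⟩

theorem memVal_add {c : ℤ} {x y : K} (hx : MemVal π c x) (hy : MemVal π c y) :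
    MemVal π c (x + y) := by
  obtain ⟨a, ha⟩ := hx; obtain ⟨b, hb⟩ := hy
  exact ⟨a + b, by rw [mul_add, ha, hb, map_add]⟩

theorem memVal_sum {ι : Type*} {s : Finset ι} {c : ℤ} {f : ι → K}
    (h : ∀ i ∈ s, MemVal π c (f i)) : MemVal π c (∑ i ∈ s, f i) := by
  classical
  induction s using Finset.induction_on with
  | empty => simpa using memVal_zero c
  | @insert a s' hx ih =>
    rw [Finset.sum_insert hx]
    exact memVal_add (h a (Finset.mem_insert_self _ _))
      (ih fun i hi => h i (Finset.mem_insert_of_mem hi))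

theorem memVal_mul (hu : algebraMap O K π ≠ 0) {c d : ℤ} {x y : K}
    (hx : MemVal π c x) (hy : MemVal π d y) : MemVal π (c + d) (x * y) := by
  obtain ⟨a, ha⟩ := hx; obtain ⟨b, hb⟩ := hy
  refine ⟨a * b, ?_⟩
  rw [zpow_add₀ hu, map_mul, ← ha, ← hb]; ring

theorem memVal_prod (hu : algebraMap O K π ≠ 0) {ι : Type*} {s : Finset ι}
    {c : ι → ℤ} {f : ι → K} (h : ∀ i ∈ s, MemVal π (c i) (f i)) :
    MemVal π (∑ i ∈ s, c i) (∏ i ∈ s, f i) := by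
  classical
  induction s using Finset.induction_on with
  | empty => simpa using memVal_one
  | @insert a s' hx ih =>
    rw [Finset.sum_insert hx, Finset.prod_insert hx]
    exact memVal_mul hu (h a (Finset.mem_insert_self _ _))
      (ih fun i hi => h i (Finset.mem_insert_of_mem hi))

theorem memVal_of_le (hu : algebraMap O K π ≠ 0) {c d : ℤ} (hcd : c ≤ d) {x : K}
    (hx : MemVal π c x) : MemVal π d x := by
  obtain ⟨a, ha⟩ := hx
  refine ⟨π ^ (d - c).toNat * a, ?_⟩
  have h1 : (algebraMap O K π) ^ d = (algebraMap O K π) ^ ((d - c).toNat : ℤ) *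
      (algebraMap O K π) ^ c := by
    rw [← zpow_add₀ hu]
    congr 1
    omega
  rw [h1, mul_assoc, ha, zpow_natCast, map_mul, map_pow]

theorem memVal_zpow_neg (hu : algebraMap O K π ≠ 0) (s : ℤ) :
    MemVal π s ((algebraMap O K π) ^ (-s)) :=
  ⟨1, by rw [← zpow_add₀ hu]; simp⟩

/-- The key nondegeneracy fact: if `π^t ∈ O` within `K` then `t ≥ 0`. -/
theorem le_of_zpow_eq (hinj : Function.Injective (algebraMap O K)) (hπ : ¬IsUnit π)
    (hu : algebraMap O K π ≠ 0) {t : ℤ} {y : O}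
    (h : (algebraMap O K π) ^ t = algebraMap O K y) : 0 ≤ t := by
  by_contra hneg
  push_neg at hneg
  have h2 : algebraMap O K (π ^ (-t).toNat * y) = algebraMap O K 1 := by
    rw [map_mul, map_pow, ← h, map_one, ← zpow_natCast, ← zpow_add₀ hu]
    rw [show ((-t).toNat : ℤ) + t = 0 by omega, zpow_zero]
  have h3 : π ^ (-t).toNat * y = 1 := hinj h2
  have : IsUnit π := by
    apply IsUnit.of_mul_eq_one (a := π) (π ^ ((-t).toNat - 1) * y)
    rw [← mul_assoc, ← pow_succ']
    rw [show (-t).toNat - 1 + 1 = (-t).toNat by omega]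
    exact h3
  exact hπ this

theorem le_of_memVal_zpow_neg (hinj : Function.Injective (algebraMap O K)) (hπ : ¬IsUnit π)
    (hu : algebraMap O K π ≠ 0) {s c : ℤ}
    (h : MemVal π c ((algebraMap O K π) ^ (-s))) : s ≤ c := by
  obtain ⟨y, hy⟩ := h
  rw [← zpow_add₀ hu] at hy
  have := le_of_zpow_eq hinj hπ hu hy
  omega

end PosTriangleAux

namespace PosTriangleAux

theorem le_val_of_strictMono {k r : ℕ} {f : Fin k → Fin r} (hf : StrictMono f)
    (i : Fin k) : (i : ℕ) ≤ (f i : ℕ) := by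
  have key : ∀ n : ℕ, ∀ h : n < k, n ≤ (f ⟨n, h⟩ : ℕ) := by
    intro n
    induction n with
    | zero => intro h; exact Nat.zero_le _
    | succ m ih =>
      intro h
      have hm : m < k := lt_trans (Nat.lt_succ_self m) h
      have h1 : f ⟨m, hm⟩ < f ⟨m + 1, h⟩ := hf (by simp [Fin.lt_def])
      have h2 := ih hm
      have h3 : (f ⟨m, hm⟩ : ℕ) < (f ⟨m + 1, h⟩ : ℕ) := h1
      omega
  simpa using key i.val i.isLt

theorem sum_comp_le_sum_first {r k : ℕ} (hk : k ≤ r) {p : Fin k → Fin r}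
    (hp : Function.Injective p) {a : Fin r → ℤ} (ha : Antitone a) :
    ∑ i, a (p i) ≤ ∑ i : Fin k, a (Fin.castLE hk i) := by
  classical
  set S : Finset (Fin r) := Finset.image p Finset.univ with hS
  have hcard : S.card = k := by
    rw [hS, Finset.card_image_of_injective _ hp, Finset.card_univ, Fintype.card_fin]
  set φ := S.orderEmbOfFin hcard with hφ
  have himg : Finset.image (fun i => φ i) Finset.univ = S := by
    apply Finset.coe_injective
    rw [Finset.coe_image, Finset.coe_univ, Set.image_univ]
    exact Finset.range_orderEmbOfFin S hcard
  have h1 : ∑ i, a (p i) = ∑ i, a (φ i) := by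
    calc ∑ i, a (p i) = ∑ x ∈ S, a x :=
          (Finset.sum_image fun x _ y _ h => hp h).symm
      _ = ∑ i, a (φ i) := by
          rw [← himg]; exact Finset.sum_image fun x _ y _ h => φ.injective h
  rw [h1]
  apply Finset.sum_le_sum
  intro i _
  apply ha
  rw [Fin.le_def]
  simpa using le_val_of_strictMono φ.strictMono i

end PosTriangleAux

namespace PosTriangleAux

variable {O K : Type*} [CommRing O] [Field K] [Algebra O K] {π : O}

theorem zpow_sum {x : K} (hu : x ≠ 0) {ι : Type*} (s : Finset ι) (c : ι → ℤ) :
    x ^ (∑ i ∈ s, c i) = ∏ i ∈ s, x ^ c i := by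
  classical
  induction s using Finset.induction_on with
  | empty => simp
  | @insert a s' hx ih =>
    rw [Finset.sum_insert hx, Finset.prod_insert hx, zpow_add₀ hu, ih]

theorem det_rect_mul_expand {k r : ℕ} (A : Matrix (Fin k) (Fin r) K)
    (B : Matrix (Fin r) (Fin k) K) :
    (A * B).det = ∑ w : Fin k → Fin r, (A.submatrix id w).det * ∏ i, B (w i) i := by
  simp only [Matrix.det_apply', Matrix.mul_apply, Finset.prod_univ_sum, Finset.mul_sum,
    Fintype.piFinset_univ]
  rw [Finset.sum_comm]
  refine Finset.sum_congr rfl fun w _ => ?_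
  rw [Finset.sum_mul]
  refine Finset.sum_congr rfl fun σ _ => ?_
  simp only [Matrix.submatrix_apply, id_eq, Finset.prod_mul_distrib]
  ring

theorem memVal_det_submatrix_mul (hu : algebraMap O K π ≠ 0) {r k : ℕ} (hk : k ≤ r)
    (A : Matrix (Fin r) (Fin r) K) (α : ℤ)
    (hA : ∀ p q : Fin k → Fin r, MemVal π α ((A.submatrix p q).det))
    (a : Fin r → ℤ) (ha : Antitone a) (T : Matrix (Fin r) (Fin r) O)
    (W : Matrix (Fin r) (Fin r) K)
    (hW : ∀ i j, W i j = (algebraMap O K π) ^ (-a i) * algebraMap O K (T i j))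
    (p q : Fin k → Fin r) :
    MemVal π (α + ∑ i : Fin k, a (Fin.castLE hk i)) (((A * W).submatrix p q).det) := by
  have hsub : (A * W).submatrix p q = A.submatrix p id * W.submatrix id q := by
    ext i j; simp [Matrix.mul_apply, Matrix.submatrix_apply]
  rw [hsub, det_rect_mul_expand]
  apply memVal_sum
  intro w _
  have h1 : (A.submatrix p id).submatrix id w = A.submatrix p w := rfl
  rw [h1]
  by_cases hw : Function.Injective w
  · have hterm : MemVal π (α + ∑ i, a (w i))
        ((A.submatrix p w).det * ∏ i, (W.submatrix id q) (w i) i) := by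
      apply memVal_mul hu (hA p w)
      apply memVal_prod hu
      intro i _
      rw [Matrix.submatrix_apply, hW]
      exact ⟨T (w i) (q i), by rw [← mul_assoc, ← zpow_add₀ hu]; simp⟩
    refine memVal_of_le hu ?_ hterm
    have := sum_comp_le_sum_first hk hw ha
    omega
  · obtain ⟨i, j, hij, hne⟩ : ∃ i j, w i = w j ∧ i ≠ j := by
      rw [Function.not_injective_iff] at hw; tauto
    have hzero : (A.submatrix p w).det = 0 :=
      Matrix.det_zero_of_column_eq hne fun l => by
        rw [Matrix.submatrix_apply, Matrix.submatrix_apply, hij]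
    rw [hzero, zero_mul]
    exact memVal_zero _

end PosTriangleAux

namespace PosTriangleAux

variable {O K V : Type*} [CommRing O] [Field K] [Algebra O K]
  [AddCommGroup V] [Module K V] [Module O V] [IsScalarTower O K V] {r : ℕ}

/-- The coordinate matrix of the family `v` in the basis `e`. -/
noncomputable def cmat (e : Module.Basis (Fin r) K V) (v : Fin r → V) : Matrix (Fin r) (Fin r) K :=
  Matrix.of fun i j => e.repr (v j) i

theorem cmat_self (e : Module.Basis (Fin r) K V) : cmat e e = 1 := by
  ext i j
  simp [cmat, Module.Basis.repr_self, Matrix.one_apply, Finsupp.single_apply, eq_comm]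

theorem cmat_smul (e : Module.Basis (Fin r) K V) (d : Fin r → K) (v : Fin r → V) :
    cmat e (fun j => d j • v j) = cmat e v * Matrix.diagonal d := by
  ext i j
  rw [Matrix.mul_diagonal]
  simp [cmat, mul_comm]

theorem cmat_span (e : Module.Basis (Fin r) K V) {v w : Fin r → V}
    (h : ∀ j, v j ∈ Submodule.span O (Set.range w)) :
    ∃ T : Matrix (Fin r) (Fin r) O,
      cmat e v = cmat e w * T.map (algebraMap O K) := by
  choose c hc using fun j => (Submodule.mem_span_range_iff_exists_fun O).mp (h j)
  refine ⟨Matrix.of fun l j => c j l, ?_⟩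
  ext i j
  rw [Matrix.mul_apply]
  have hv : v j = ∑ l, algebraMap O K (c j l) • w l := by
    rw [← hc j]
    exact Finset.sum_congr rfl fun l _ => (algebraMap_smul K (c j l) (w l)).symm
  simp only [cmat, Matrix.of_apply, hv, map_sum, map_smul, Matrix.map_apply]
  rw [Finset.sum_apply']
  exact Finset.sum_congr rfl fun l _ => by
    rw [Finsupp.smul_apply, smul_eq_mul, mul_comm]

end PosTriangleAux

namespace PosTriangleAux

theorem sum_filter_lt {r k : ℕ} (hk : k ≤ r) (a : Fin r → ℤ) :
    ∑ i ∈ Finset.univ.filter (fun i : Fin r => (i : ℕ) < k), a i =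
      ∑ i : Fin k, a (Fin.castLE hk i) := by
  refine Finset.sum_bij' (fun (j : Fin r) (hj : j ∈ Finset.univ.filter
      (fun i : Fin r => (i : ℕ) < k)) => (⟨(j : ℕ), (Finset.mem_filter.mp hj).2⟩ : Fin k))
    (fun (i : Fin k) _ => Fin.castLE hk i) (fun _ _ => Finset.mem_univ _)
    (fun i _ => Finset.mem_filter.mpr ⟨Finset.mem_univ _, by simpa using i.isLt⟩)
    (fun j hj => rfl) (fun i _ => rfl) (fun j hj => rfl)

theorem filter_lt_self_eq_univ {r : ℕ} :
    Finset.univ.filter (fun i : Fin r => (i : ℕ) < r) = (Finset.univ : Finset (Fin r)) :=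
  Finset.filter_true_of_mem fun i _ => i.isLt

end PosTriangleAux

namespace PosTriangleAux

theorem det_map_algebraMap {O K : Type*} [CommRing O] [Field K] [Algebra O K] {n : ℕ}
    (A : Matrix (Fin n) (Fin n) O) :
    (A.map (algebraMap O K)).det = algebraMap O K A.det := by
  rw [← RingHom.mapMatrix_apply, ← RingHom.map_det]

end PosTriangleAux

open PosTriangleAux

/-- the relative position of lattices in a vector space over the fraction field of
a discrete valuation ring satisfies the triangle inequality
`Pos(M₁,M₃) ≤ Pos(M₁,M₂) + Pos(M₂,M₃)` in the dominance order. -/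
theorem pos_triangle_dominance {O K V : Type*} [CommRing O] [IsDomain O]
    [IsDiscreteValuationRing O] [Field K] [Algebra O K] [IsFractionRing O K]
    [AddCommGroup V] [Module K V] [Module O V] [IsScalarTower O K V]
    (π : O) (hπ : Irreducible π) {r : ℕ}
    (M₁ M₂ M₃ : Submodule O V)
    (a₁₂ a₂₃ a₁₃ : Fin r → ℤ)
    (h₁₂ : Antitone a₁₂) (h₂₃ : Antitone a₂₃) (h₁₃ : Antitone a₁₃)
    (had₁₂ : ∃ e : Module.Basis (Fin r) K V, IsAdaptedBasis π M₁ M₂ e a₁₂)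
    (had₂₃ : ∃ e : Module.Basis (Fin r) K V, IsAdaptedBasis π M₂ M₃ e a₂₃)
    (had₁₃ : ∃ e : Module.Basis (Fin r) K V, IsAdaptedBasis π M₁ M₃ e a₁₃) :
    (∀ k : ℕ, k ≤ r →
      ∑ i ∈ Finset.univ.filter (fun i : Fin r => (i : ℕ) < k), a₁₃ i ≤
        (∑ i ∈ Finset.univ.filter (fun i : Fin r => (i : ℕ) < k), a₁₂ i) +
          ∑ i ∈ Finset.univ.filter (fun i : Fin r => (i : ℕ) < k), a₂₃ i) ∧
      (∑ i, a₁₃ i) = (∑ i, a₁₂ i) + ∑ i, a₂₃ i := by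
  classical
  have hinj : Function.Injective (algebraMap O K) := IsFractionRing.injective O K
  have hu : (algebraMap O K π) ≠ 0 := fun h => hπ.ne_zero (hinj (by rw [h, map_zero]))
  obtain ⟨e, he⟩ := had₁₂
  obtain ⟨f, hf⟩ := had₂₃
  obtain ⟨g, hg⟩ := had₁₃
  obtain ⟨he1, he2⟩ := he
  obtain ⟨hf2, hf3⟩ := hf
  obtain ⟨hg1, hg3⟩ := hg
  -- abbreviations
  set D12 : Matrix (Fin r) (Fin r) K :=
    Matrix.diagonal (fun i => (algebraMap O K π) ^ (-(a₁₂ i))) with hD12def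
  set D23 : Matrix (Fin r) (Fin r) K :=
    Matrix.diagonal (fun i => (algebraMap O K π) ^ (-(a₂₃ i))) with hD23def
  set D13 : Matrix (Fin r) (Fin r) K :=
    Matrix.diagonal (fun i => (algebraMap O K π) ^ (-(a₁₃ i))) with hD13def
  -- membership facts and coordinate matrices
  have hmem1 : ∀ j, g j ∈ Submodule.span O (Set.range fun i => e i) := by
    intro j; rw [← he1, hg1]; exact Submodule.subset_span ⟨j, rfl⟩
  obtain ⟨P, hP⟩ := cmat_span e hmem1
  have hmem2 : ∀ j, e j ∈ Submodule.span O (Set.range fun i => g i) := by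
    intro j; rw [← hg1, he1]; exact Submodule.subset_span ⟨j, rfl⟩
  obtain ⟨P', hP'⟩ := cmat_span e hmem2
  have hmem3 : ∀ j, f j ∈ Submodule.span O
      (Set.range fun i => (algebraMap O K π) ^ (-(a₁₂ i)) • e i) := by
    intro j; rw [← he2, hf2]; exact Submodule.subset_span ⟨j, rfl⟩
  obtain ⟨Q, hQ⟩ := cmat_span e hmem3
  have hmem4 : ∀ j, (algebraMap O K π) ^ (-(a₁₂ j)) • e j ∈ Submodule.span O
      (Set.range fun i => f i) := by
    intro j; rw [← hf2, he2]; exact Submodule.subset_span ⟨j, rfl⟩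
  obtain ⟨Q', hQ'⟩ := cmat_span e hmem4
  have hmem5 : ∀ j, (algebraMap O K π) ^ (-(a₁₃ j)) • g j ∈ Submodule.span O
      (Set.range fun i => (algebraMap O K π) ^ (-(a₂₃ i)) • f i) := by
    intro j; rw [← hf3, hg3]; exact Submodule.subset_span ⟨j, rfl⟩
  obtain ⟨R, hR⟩ := cmat_span e hmem5
  have hmem6 : ∀ j, (algebraMap O K π) ^ (-(a₂₃ j)) • f j ∈ Submodule.span O
      (Set.range fun i => (algebraMap O K π) ^ (-(a₁₃ i)) • g i) := by
    intro j; rw [← hg3, hf3]; exact Submodule.subset_span ⟨j, rfl⟩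
  obtain ⟨R', hR'⟩ := cmat_span e hmem6
  -- massage the six identities
  have hG : cmat e (fun i => g i) = P.map (algebraMap O K) := by
    rw [hP, cmat_self, one_mul]
  have hone : cmat e (fun i => g i) * P'.map (algebraMap O K) = 1 := by
    rw [← hP', cmat_self]
  have hF : cmat e (fun i => f i) = D12 * Q.map (algebraMap O K) := by
    rw [hQ, cmat_smul e (fun i => (algebraMap O K π) ^ (-(a₁₂ i))) (fun i => e i),
      cmat_self, one_mul]
  have hQ'2 : D12 = cmat e (fun i => f i) * Q'.map (algebraMap O K) := by
    rw [← hQ', cmat_smul e (fun i => (algebraMap O K π) ^ (-(a₁₂ i))) (fun i => e i),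
      cmat_self, one_mul]
  have hR5 : cmat e (fun i => g i) * D13 =
      (cmat e (fun i => f i) * D23) * R.map (algebraMap O K) := by
    rw [← cmat_smul e (fun i => (algebraMap O K π) ^ (-(a₁₃ i))) (fun i => g i),
      ← cmat_smul e (fun i => (algebraMap O K π) ^ (-(a₂₃ i))) (fun i => f i), hR]
  have hR6 : cmat e (fun i => f i) * D23 =
      (cmat e (fun i => g i) * D13) * R'.map (algebraMap O K) := by
    rw [← cmat_smul e (fun i => (algebraMap O K π) ^ (-(a₂₃ i))) (fun i => f i),
      ← cmat_smul e (fun i => (algebraMap O K π) ^ (-(a₁₃ i))) (fun i => g i), hR']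
  have hP'G : P'.map (algebraMap O K) * cmat e (fun i => g i) = 1 :=
    mul_eq_one_comm.mp hone
  have hmain : D13 = (P'.map (algebraMap O K) * (D12 * Q.map (algebraMap O K))) *
      (D23 * R.map (algebraMap O K)) := by
    calc D13 = (P'.map (algebraMap O K) * cmat e (fun i => g i)) * D13 := by
          rw [hP'G, one_mul]
      _ = P'.map (algebraMap O K) * (cmat e (fun i => g i) * D13) := by
          rw [Matrix.mul_assoc]
      _ = P'.map (algebraMap O K) * ((cmat e (fun i => f i) * D23) *
            R.map (algebraMap O K)) := by rw [hR5]
      _ = P'.map (algebraMap O K) * (((D12 * Q.map (algebraMap O K)) * D23) *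
            R.map (algebraMap O K)) := by rw [hF]
      _ = (P'.map (algebraMap O K) * (D12 * Q.map (algebraMap O K))) *
            (D23 * R.map (algebraMap O K)) := by simp only [Matrix.mul_assoc]
  -- PART 1: the dominance inequalities
  have part1 : ∀ k : ℕ, k ≤ r →
      ∑ i ∈ Finset.univ.filter (fun i : Fin r => (i : ℕ) < k), a₁₃ i ≤
        (∑ i ∈ Finset.univ.filter (fun i : Fin r => (i : ℕ) < k), a₁₂ i) +
          ∑ i ∈ Finset.univ.filter (fun i : Fin r => (i : ℕ) < k), a₂₃ i := by
    intro k hk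
    rw [sum_filter_lt hk a₁₂, sum_filter_lt hk a₂₃, sum_filter_lt hk a₁₃]
    have hminP' : ∀ p q : Fin k → Fin r,
        MemVal π 0 (((P'.map (algebraMap O K)).submatrix p q).det) := by
      intro p q
      have hsm : (P'.map (algebraMap O K)).submatrix p q =
          (P'.submatrix p q).map (algebraMap O K) := rfl
      rw [hsm, det_map_algebraMap]
      exact memVal_algebraMap _
    have hW1 : ∀ i j, (D12 * Q.map (algebraMap O K)) i j =
        (algebraMap O K π) ^ (-(a₁₂ i)) * algebraMap O K (Q i j) := by
      intro i j; rw [hD12def, Matrix.diagonal_mul]; rfl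
    have hW2 : ∀ i j, (D23 * R.map (algebraMap O K)) i j =
        (algebraMap O K π) ^ (-(a₂₃ i)) * algebraMap O K (R i j) := by
      intro i j; rw [hD23def, Matrix.diagonal_mul]; rfl
    have step1 := fun p q => memVal_det_submatrix_mul hu hk (P'.map (algebraMap O K)) 0
      hminP' a₁₂ h₁₂ Q (D12 * Q.map (algebraMap O K)) hW1 p q
    have step2 := memVal_det_submatrix_mul hu hk
      (P'.map (algebraMap O K) * (D12 * Q.map (algebraMap O K)))
      (0 + ∑ i : Fin k, a₁₂ (Fin.castLE hk i)) step1 a₂₃ h₂₃ R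
      (D23 * R.map (algebraMap O K)) hW2 (Fin.castLE hk) (Fin.castLE hk)
    rw [← hmain] at step2
    have hdiag : D13.submatrix (Fin.castLE hk) (Fin.castLE hk) =
        Matrix.diagonal (fun i : Fin k =>
          (algebraMap O K π) ^ (-(a₁₃ (Fin.castLE hk i)))) := by
      ext i j
      by_cases hij : i = j
      · subst hij; simp [hD13def]
      · have hcc : Fin.castLE hk i ≠ Fin.castLE hk j :=
          fun hcc => hij (Fin.castLE_injective hk hcc)
        rw [Matrix.submatrix_apply, hD13def, Matrix.diagonal_apply_ne _ hcc,
          Matrix.diagonal_apply_ne _ hij]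
    rw [hdiag, Matrix.det_diagonal] at step2
    have hprod : ∏ i : Fin k, (algebraMap O K π) ^ (-(a₁₃ (Fin.castLE hk i))) =
        (algebraMap O K π) ^ (-(∑ i : Fin k, a₁₃ (Fin.castLE hk i))) := by
      rw [← zpow_sum hu Finset.univ (fun i : Fin k => -(a₁₃ (Fin.castLE hk i)))]
      congr 1
      rw [Finset.sum_neg_distrib]
    rw [hprod] at step2
    have hfin := le_of_memVal_zpow_neg hinj hπ.not_isUnit hu step2
    omega
  refine ⟨part1, ?_⟩
  -- PART 2: equality of total sums
  have hle1 : (∑ i, a₁₃ i) ≤ (∑ i, a₁₂ i) + ∑ i, a₂₃ i := by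
    have h := part1 r le_rfl
    simp only [filter_lt_self_eq_univ] at h
    exact h
  have hdetD : ∀ b : Fin r → ℤ,
      (Matrix.diagonal fun i => (algebraMap O K π) ^ (-(b i))).det =
        (algebraMap O K π) ^ (-(∑ i, b i)) := by
    intro b
    rw [Matrix.det_diagonal, ← zpow_sum hu Finset.univ (fun i => -(b i))]
    congr 1
    rw [Finset.sum_neg_distrib]
  -- determinant identity from hmain
  have hdetmain : (algebraMap O K π) ^ (-(∑ i, a₁₃ i)) =
      (algebraMap O K P'.det * ((algebraMap O K π) ^ (-(∑ i, a₁₂ i)) *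
        algebraMap O K Q.det)) *
      ((algebraMap O K π) ^ (-(∑ i, a₂₃ i)) * algebraMap O K R.det) := by
    have h := congrArg Matrix.det hmain
    simp only [Matrix.det_mul] at h
    rw [hD13def, hD12def, hD23def, hdetD a₁₃, hdetD a₁₂, hdetD a₂₃,
      det_map_algebraMap, det_map_algebraMap, det_map_algebraMap] at h
    exact h
  -- unit facts
  have hPunit : algebraMap O K P.det * algebraMap O K P'.det = 1 := by
    have h := congrArg Matrix.det hone
    rw [hG] at h
    simp only [Matrix.det_mul, Matrix.det_one, det_map_algebraMap] at h
    exact h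
  have hQ'3 : D12 = (D12 * Q.map (algebraMap O K)) * Q'.map (algebraMap O K) := by
    rw [← hF]; exact hQ'2
  have hQunit : algebraMap O K Q.det * algebraMap O K Q'.det = 1 := by
    have h := congrArg Matrix.det hQ'3
    simp only [Matrix.det_mul] at h
    rw [hD12def, hdetD a₁₂, det_map_algebraMap, det_map_algebraMap] at h
    have hz : (algebraMap O K π) ^ (-(∑ i, a₁₂ i)) ≠ 0 := zpow_ne_zero _ hu
    apply mul_left_cancel₀ hz
    rw [mul_one, ← mul_assoc]
    exact h.symm
  have hR56 : cmat e (fun i => g i) * D13 =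
      ((cmat e (fun i => g i) * D13) * R'.map (algebraMap O K)) *
        R.map (algebraMap O K) := by
    rw [← hR6]; exact hR5
  have hRunit : algebraMap O K R'.det * algebraMap O K R.det = 1 := by
    have h := congrArg Matrix.det hR56
    simp only [Matrix.det_mul] at h
    rw [det_map_algebraMap, det_map_algebraMap] at h
    have hz : (cmat e (fun i => g i)).det * D13.det ≠ 0 := by
      apply mul_ne_zero
      · rw [hG, det_map_algebraMap]
        exact left_ne_zero_of_mul_eq_one hPunit
      · rw [hD13def, hdetD a₁₃]
        exact zpow_ne_zero _ hu
    apply mul_left_cancel₀ hz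
    rw [mul_one]
    linear_combination -h
  have hge : (∑ i, a₁₂ i) + ∑ i, a₂₃ i ≤ ∑ i, a₁₃ i := by
    apply le_of_memVal_zpow_neg hinj hπ.not_isUnit hu
    refine ⟨P.det * (Q'.det * R'.det), ?_⟩
    calc (algebraMap O K π) ^ (∑ i, a₁₃ i) *
          (algebraMap O K π) ^ (-((∑ i, a₁₂ i) + ∑ i, a₂₃ i))
        = (algebraMap O K π) ^ (∑ i, a₁₃ i) *
            ((algebraMap O K π) ^ (-(∑ i, a₁₂ i)) *
              (algebraMap O K π) ^ (-(∑ i, a₂₃ i))) := by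
          rw [neg_add, zpow_add₀ hu]
      _ = (algebraMap O K π) ^ (∑ i, a₁₃ i) *
            ((algebraMap O K π) ^ (-(∑ i, a₁₂ i)) *
              (algebraMap O K π) ^ (-(∑ i, a₂₃ i))) *
            ((algebraMap O K P.det * algebraMap O K P'.det) *
              ((algebraMap O K Q.det * algebraMap O K Q'.det) *
                (algebraMap O K R'.det * algebraMap O K R.det))) := by
          rw [hPunit, hQunit, hRunit]; ring
      _ = ((algebraMap O K π) ^ (∑ i, a₁₃ i) *
            ((algebraMap O K P'.det * ((algebraMap O K π) ^ (-(∑ i, a₁₂ i)) *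
                algebraMap O K Q.det)) *
              ((algebraMap O K π) ^ (-(∑ i, a₂₃ i)) * algebraMap O K R.det))) *
            (algebraMap O K P.det * (algebraMap O K Q'.det *
              algebraMap O K R'.det)) := by ring
      _ = ((algebraMap O K π) ^ (∑ i, a₁₃ i) *
            (algebraMap O K π) ^ (-(∑ i, a₁₃ i))) *
            (algebraMap O K P.det * (algebraMap O K Q'.det *
              algebraMap O K R'.det)) := by rw [← hdetmain]
      _ = algebraMap O K P.det * (algebraMap O K Q'.det * algebraMap O K R'.det) := by
          rw [← zpow_add₀ hu]; simp
      _ = algebraMap O K (P.det * (Q'.det * R'.det)) := by rw [map_mul, map_mul]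
  omega
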